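/- Twist preserves invertibility and the braid relation: let R ∈ End(V⊗V) be an invertible solution of the Yang–Baxter equation and R̃ = τ(F)⁻¹ R F for invertible F satisfying the hypotheses of the twisting theorem (existence of invertible Φ, Ψ ∈ End(V^{⊗3}) with Φ F₁₂ = Ψ F₂₃, R₁₂ Φ = Φ^{(213)} R₁₂, R₂₃ Ψ = Ψ^{(132)} R₂₃). Then the braid operator R̂̃ := P R̃ satisfies the braid relation R̂̃₁₂ R̂̃₂₃ R̂̃₁₂ = R̂̃₂₃ R̂̃₁₂ R̂̃₂₃ in End(V⊗V⊗V), and R̂̃ = F⁻¹ R̂ F where R̂ = P R, i.e. twisting is a similarity transformation of braid matrices. -/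
import Mathlib


open TensorProduct


section MonoidAux
variable {M : Type*} [Monoid M]

lemma mrw {a b c d : M} (h : a * b = c * d) (t : M) : a * (b * t) = c * (d * t) := by
  rw [← mul_assoc, h, mul_assoc]

lemma mrw1 {a b : M} (h : a * b = 1) (t : M) : a * (b * t) = t := by
  rw [← mul_assoc, h, one_mul]

lemma braid_of_yb (p q a b c : M) (hp : p * p = 1) (hq : q * q = 1)
    (hpq : p * q * p = q * p * q)
    (hc1 : c = q * a * q) (hc2 : c = p * b * p)
    (hyb : a * c * b = b * c * a) :
    p * a * (q * b) * (p * a) = q * b * (p * a) * (q * b) := by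
  have aq : a * q = q * c := by rw [hc1, ← mul_assoc, ← mul_assoc, hq, one_mul]
  have bp : b * p = p * c := by rw [hc2, ← mul_assoc, ← mul_assoc, hp, one_mul]
  have cp : c * p = p * b := by rw [hc2, mul_assoc, mul_assoc, hp, mul_one]
  have cq : c * q = q * a := by rw [hc1, mul_assoc, mul_assoc, hq, mul_one]
  have hyb' : ∀ t, a * (c * (b * t)) = b * (c * (a * t)) := by
    intro t
    rw [← mul_assoc, ← mul_assoc, hyb, mul_assoc, mul_assoc]
  have hpq' : ∀ t, p * (q * (p * t)) = q * (p * (q * t)) := by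
    intro t
    rw [← mul_assoc, ← mul_assoc, hpq, mul_assoc, mul_assoc]
  simp only [mul_assoc]
  rw [mrw aq, mrw bp, mrw cp, hpq']
  rw [mrw bp, mrw aq, mrw cq]
  have h2 : b * (c * a) = a * (c * b) := by
    simp only [← mul_assoc]; rw [hyb]
  rw [h2]

lemma braid_conj (b1 b2 f1 f2 f1' f2' φ φ' ψ ψ' : M)
    (hf1 : f1 * f1' = 1) (hf1' : f1' * f1 = 1)
    (hf2 : f2 * f2' = 1) (hf2' : f2' * f2 = 1)
    (hφ : φ * φ' = 1) (hφ' : φ' * φ = 1)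
    (hψ : ψ * ψ' = 1) (hψ' : ψ' * ψ = 1)
    (hb : b1 * b2 * b1 = b2 * b1 * b2)
    (c1 : φ * f1 = ψ * f2)
    (cφ : b1 * φ = φ * b1) (cψ : b2 * ψ = ψ * b2) :
    f1' * (b1 * (f1 * (f2' * (b2 * (f2 * (f1' * (b1 * f1))))))) =
      f2' * (b2 * (f2 * (f1' * (b1 * (f1 * (f2' * (b2 * f2))))))) := by
  have f12' : f1 * f2' = φ' * ψ := by
    have : φ' * (φ * (f1 * f2')) = φ' * (ψ * (f2 * f2')) := by
      rw [← mul_assoc φ f1, c1, mul_assoc]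
    rw [mrw1 hφ'] at this
    rw [this, hf2, mul_one]
  have f21' : f2 * f1' = ψ' * φ := by
    have : ψ' * (ψ * (f2 * f1')) = ψ' * (φ * (f1 * f1')) := by
      rw [← mul_assoc ψ f2, ← c1, mul_assoc]
    rw [mrw1 hψ'] at this
    rw [this, hf1, mul_one]
  have cφ' : b1 * φ' = φ' * b1 := by
    have := congrArg (fun x => φ' * x * φ') cφ
    simp only [← mul_assoc] at this
    rw [hφ', one_mul] at this
    rw [← this, mul_assoc, mul_assoc, hφ, mul_one]
  have cψ' : b2 * ψ' = ψ' * b2 := by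
    have := congrArg (fun x => ψ' * x * ψ') cψ
    simp only [← mul_assoc] at this
    rw [hψ', one_mul] at this
    rw [← this, mul_assoc, mul_assoc, hψ, mul_one]
  have inv1 : f1' * φ' = f2' * ψ' := by
    have e1 : ψ * f2 * (f2' * ψ') = 1 := by rw [mul_assoc, mrw1 hf2, hψ]
    calc f1' * φ' = f1' * (φ' * (ψ * f2 * (f2' * ψ'))) := by rw [e1, mul_one]
      _ = f1' * (φ' * (φ * (f1 * (f2' * ψ')))) := by rw [← c1, mul_assoc φ f1]
      _ = f2' * ψ' := by rw [mrw1 hφ', mrw1 hf1']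
  have hb' : ∀ t, b1 * (b2 * (b1 * t)) = b2 * (b1 * (b2 * t)) := by
    intro t
    rw [← mul_assoc, ← mul_assoc, hb, mul_assoc, mul_assoc]
  rw [mrw f12', mrw f21', mrw cψ', mrw1 hψ, mrw cφ', mrw (cφ.symm), c1]
  rw [← mul_assoc f1' φ', inv1, mul_assoc, hb']
  rw [mrw f21', mrw f12', mrw cφ', mrw1 hφ, mrw cψ', mrw (cψ.symm)]
end MonoidAux


noncomputable section
variable (k V : Type*) [Field k] [AddCommGroup V] [Module k V]

/-- The flip `P : V ⊗ V → V ⊗ V`. -/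
def flipE : Module.End k (V ⊗[k] V) := (TensorProduct.comm k V V).toLinearMap

/-- `τ(X) = P X P`. -/
def tauE (X : Module.End k (V ⊗[k] V)) : Module.End k (V ⊗[k] V) :=
  flipE k V * X * flipE k V

/-- The embedding `X ↦ X₂₃` into `End(V ⊗ V ⊗ V)`. -/
def leg23 (X : Module.End k (V ⊗[k] V)) : Module.End k (V ⊗[k] (V ⊗[k] V)) :=
  LinearMap.lTensor V X

/-- The embedding `X ↦ X₁₂` into `End(V ⊗ V ⊗ V)`. -/
def leg12 (X : Module.End k (V ⊗[k] V)) : Module.End k (V ⊗[k] (V ⊗[k] V)) :=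
  (TensorProduct.assoc k V V V).toLinearMap ∘ₗ LinearMap.rTensor V X ∘ₗ
    (TensorProduct.assoc k V V V).symm.toLinearMap

/-- The flip of factors 1 and 2. -/
def P12 : Module.End k (V ⊗[k] (V ⊗[k] V)) := leg12 k V (flipE k V)

/-- The flip of factors 2 and 3. -/
def P23 : Module.End k (V ⊗[k] (V ⊗[k] V)) := leg23 k V (flipE k V)

/-- The embedding `X ↦ X₁₃`. -/
def leg13 (X : Module.End k (V ⊗[k] V)) : Module.End k (V ⊗[k] (V ⊗[k] V)) :=
  P23 k V * leg12 k V X * P23 k V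

/-- The Yang–Baxter equation `R₁₂R₁₃R₂₃ = R₂₃R₁₃R₁₂`. -/
def YB (R : Module.End k (V ⊗[k] V)) : Prop :=
  leg12 k V R * leg13 k V R * leg23 k V R = leg23 k V R * leg13 k V R * leg12 k V R


section MyTensorAux
variable (k V : Type*) [Field k] [AddCommGroup V] [Module k V]

lemma my_ext3 {f g : Module.End k (V ⊗[k] (V ⊗[k] V))}
    (h : ∀ x y z : V, f (x ⊗ₜ[k] (y ⊗ₜ[k] z)) = g (x ⊗ₜ[k] (y ⊗ₜ[k] z))) : f = g := by
  apply TensorProduct.ext'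
  intro x t
  induction t using TensorProduct.induction_on with
  | zero => simp
  | tmul y z => exact h x y z
  | add t1 t2 h1 h2 => rw [TensorProduct.tmul_add, map_add, map_add, h1, h2]

lemma flipE_sq : flipE k V * flipE k V = 1 := by
  apply TensorProduct.ext'
  intro x y
  simp [flipE, Module.End.mul_apply]

lemma leg23_mul (X Y : Module.End k (V ⊗[k] V)) :
    leg23 k V (X * Y) = leg23 k V X * leg23 k V Y := by
  apply TensorProduct.ext'
  intro x y
  simp [leg23, Module.End.mul_apply]

lemma leg12_mul (X Y : Module.End k (V ⊗[k] V)) :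
    leg12 k V (X * Y) = leg12 k V X * leg12 k V Y := by
  apply my_ext3
  intro x y z
  simp [leg12, Module.End.mul_apply]

lemma leg23_one : leg23 k V 1 = 1 := by
  apply TensorProduct.ext'; intro x y; simp [leg23]

lemma leg12_one : leg12 k V 1 = 1 := by
  apply my_ext3; intro x y z; simp [leg12]

lemma P12_sq : P12 k V * P12 k V = 1 := by
  show leg12 k V (flipE k V) * leg12 k V (flipE k V) = 1
  rw [← leg12_mul, flipE_sq, leg12_one]

lemma P23_sq : P23 k V * P23 k V = 1 := by
  show leg23 k V (flipE k V) * leg23 k V (flipE k V) = 1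
  rw [← leg23_mul, flipE_sq, leg23_one]

lemma P12_leg23 (X : Module.End k (V ⊗[k] V)) :
    P12 k V * leg23 k V X * P12 k V = P23 k V * leg12 k V X * P23 k V := by
  apply my_ext3; intro x y z
  have key : ∀ t : V ⊗[k] V, (P12 k V) (y ⊗ₜ[k] t)
      = (P23 k V) ((TensorProduct.assoc k V V V) (t ⊗ₜ[k] y)) := by
    intro t
    induction t using TensorProduct.induction_on with
    | zero => simp
    | tmul a b => simp [P12, P23, leg12, leg23, flipE]
    | add t1 t2 h1 h2 =>
        rw [TensorProduct.tmul_add, TensorProduct.add_tmul, map_add, map_add, map_add, h1, h2]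
  have l : (P12 k V * leg23 k V X * P12 k V) (x ⊗ₜ[k] (y ⊗ₜ[k] z))
      = (P12 k V) (y ⊗ₜ[k] X (x ⊗ₜ[k] z)) := by
    simp [P12, leg12, leg23, flipE, Module.End.mul_apply]
  have r : (P23 k V * leg12 k V X * P23 k V) (x ⊗ₜ[k] (y ⊗ₜ[k] z))
      = (P23 k V) ((TensorProduct.assoc k V V V) (X (x ⊗ₜ[k] z) ⊗ₜ[k] y)) := by
    simp [P23, leg12, leg23, flipE, Module.End.mul_apply]
  rw [l, r, key]

lemma P_braid : P12 k V * P23 k V * P12 k V = P23 k V * P12 k V * P23 k V := by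
  apply my_ext3; intro x y z
  simp [P12, P23, leg12, leg23, flipE, Module.End.mul_apply]

end MyTensorAux

/-- under the hypotheses of the twisting theorem, the twisted braid
operator `R̂̃ = P R̃` satisfies the braid relation, and `R̂̃ = F⁻¹ R̂ F` where `R̂ = P R`:
twisting is a similarity transformation of braid matrices. -/
theorem twist_braid_relation [FiniteDimensional k V]
    (R R' F F' : Module.End k (V ⊗[k] V))
    (Φ Φ' Ψ Ψ' : Module.End k (V ⊗[k] (V ⊗[k] V)))
    (hR : R * R' = 1) (hR' : R' * R = 1)
    (hF : F * F' = 1) (hF' : F' * F = 1)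
    (hΦ : Φ * Φ' = 1) (hΦ' : Φ' * Φ = 1)
    (hΨ : Ψ * Ψ' = 1) (hΨ' : Ψ' * Ψ = 1)
    (hYB : YB k V R)
    (cond1 : Φ * leg12 k V F = Ψ * leg23 k V F)
    (cond2 : leg12 k V R * Φ = (P12 k V * Φ * P12 k V) * leg12 k V R)
    (cond3 : leg23 k V R * Ψ = (P23 k V * Ψ * P23 k V) * leg23 k V R) :
    (leg12 k V (flipE k V * (tauE k V F' * R * F)) *
        leg23 k V (flipE k V * (tauE k V F' * R * F)) *
        leg12 k V (flipE k V * (tauE k V F' * R * F)) =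
      leg23 k V (flipE k V * (tauE k V F' * R * F)) *
        leg12 k V (flipE k V * (tauE k V F' * R * F)) *
        leg23 k V (flipE k V * (tauE k V F' * R * F))) ∧
    flipE k V * (tauE k V F' * R * F) = F' * (flipE k V * R) * F := by
  have part2 : flipE k V * (tauE k V F' * R * F) = F' * (flipE k V * R) * F := by
    simp only [tauE]
    simp only [← mul_assoc]
    rw [flipE_sq, one_mul]
  refine ⟨?_, part2⟩
  rw [part2]
  have hp12 : leg12 k V (flipE k V) = P12 k V := rfl
  have hp23 : leg23 k V (flipE k V) = P23 k V := rfl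
  -- invertibility of legs
  have hf1 : leg12 k V F * leg12 k V F' = 1 := by rw [← leg12_mul, hF, leg12_one]
  have hf1' : leg12 k V F' * leg12 k V F = 1 := by rw [← leg12_mul, hF', leg12_one]
  have hf2 : leg23 k V F * leg23 k V F' = 1 := by rw [← leg23_mul, hF, leg23_one]
  have hf2' : leg23 k V F' * leg23 k V F = 1 := by rw [← leg23_mul, hF', leg23_one]
  -- commutation of braid legs with Φ, Ψ
  have cφ : (P12 k V * leg12 k V R) * Φ = Φ * (P12 k V * leg12 k V R) := by
    rw [mul_assoc, cond2]
    simp only [← mul_assoc]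
    rw [P12_sq, one_mul]
  have cψ : (P23 k V * leg23 k V R) * Ψ = Ψ * (P23 k V * leg23 k V R) := by
    rw [mul_assoc, cond3]
    simp only [← mul_assoc]
    rw [P23_sq, one_mul]
  -- braid relation for P * R
  have hb : (P12 k V * leg12 k V R) * (P23 k V * leg23 k V R) * (P12 k V * leg12 k V R)
      = (P23 k V * leg23 k V R) * (P12 k V * leg12 k V R) * (P23 k V * leg23 k V R) := by
    refine braid_of_yb (P12 k V) (P23 k V) (leg12 k V R) (leg23 k V R) (leg13 k V R)
      (P12_sq k V) (P23_sq k V) (P_braid k V) rfl ((P12_leg23 k V R).symm) hYB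
  -- conjugated braid relation
  have c1' : Φ * leg12 k V F = Ψ * leg23 k V F := cond1
  have key := braid_conj (P12 k V * leg12 k V R) (P23 k V * leg23 k V R)
    (leg12 k V F) (leg23 k V F) (leg12 k V F') (leg23 k V F') Φ Φ' Ψ Ψ'
    hf1 hf1' hf2 hf2' hΦ hΦ' hΨ hΨ' hb c1' cφ cψ
  simp only [leg12_mul, leg23_mul, hp12, hp23]
  simp only [mul_assoc]
  simp only [mul_assoc] at key
  exact key
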